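/- Let F₂ = ⟨a,b⟩, let w ∈ F₂ be nontrivial, let E be a real normed space, let ρ be a representation of F₂ on E by linear isometries, and let e ∈ E. For each g ∈ F₂ the sets w₊(g) and w₋(g) are finite, so that η(g) = ∑_{h ∈ w₊(g)} ρ(h)e − ∑_{h ∈ w₋(g)} ρ(h)e is a well-defined element of E. Then η is a quasi-cocycle for ρ, i.e. sup_{g,g' ∈ F₂} ‖η(gg') − η(g) − ρ(g)η(g')‖ < ∞, and η is anti-symmetric: η(g⁻¹) = −ρ(g⁻¹)η(g) for all g ∈ F₂. -/

import Mathlib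

/-- The word length of an element of the free group `F₂`: the length of its reduced word. -/
def wlen (g : FreeGroup (Fin 2)) : ℕ := g.toWord.length

/-- For `w, g ∈ F₂`, the set of `h ∈ F₂` such that `h` and `hw` both lie, in this order, on
the geodesic from `1` to `g` in the Cayley tree of `F₂`. -/
def wplus (w g : FreeGroup (Fin 2)) : Set (FreeGroup (Fin 2)) :=
  {h | wlen (h * w) = wlen h + wlen w ∧
    wlen h + wlen (h⁻¹ * g) = wlen g ∧
    wlen (h * w) + wlen ((h * w)⁻¹ * g) = wlen g}

/-- For `w, g ∈ F₂`, the set of `h ∈ F₂` such that `hw` and `h` both lie, in this order, on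
the geodesic from `1` to `g` in the Cayley tree of `F₂`. -/
def wminus (w g : FreeGroup (Fin 2)) : Set (FreeGroup (Fin 2)) :=
  {h | wlen h = wlen (h * w) + wlen w ∧
    wlen h + wlen (h⁻¹ * g) = wlen g ∧
    wlen (h * w) + wlen ((h * w)⁻¹ * g) = wlen g}

/-- The Brooks-type map `η(g) = ∑_{h ∈ w₊(g)} ρ(h)e − ∑_{h ∈ w₋(g)} ρ(h)e` associated to a
representation `ρ` of `F₂` by linear isometries, a nontrivial word `w` and a vector `e`. -/
noncomputable def brooksEta {E : Type*} [NormedAddCommGroup E] [NormedSpace ℝ E]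
    (ρ : FreeGroup (Fin 2) → (E ≃ₗᵢ[ℝ] E)) (w : FreeGroup (Fin 2)) (e : E)
    (g : FreeGroup (Fin 2)) : E :=
  (∑ᶠ h ∈ wplus w g, ρ h e) - ∑ᶠ h ∈ wminus w g, ρ h e

namespace BrooksAux

open FreeGroup List

abbrev Letter := Fin 2 × Bool

/-- A word is reduced: no adjacent cancelling pair. -/
def IsRed (L : List Letter) : Prop :=
  List.Chain' (fun a b => ¬(a.1 = b.1 ∧ a.2 = !b.2)) L

theorem IsRed.reduce_eq {L : List Letter} (h : IsRed L) : FreeGroup.reduce L = L := by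
  induction L with
  | nil => rfl
  | cons x L ih =>
    have hL : IsRed L := (List.isChain_cons.mp h).2
    rw [FreeGroup.reduce.cons, ih hL]
    cases L with
    | nil => rfl
    | cons y t =>
      have hxy : ¬(x.1 = y.1 ∧ x.2 = !y.2) := (List.isChain_cons_cons.mp h).1
      simp only [hxy, if_false]

theorem isRed_of_no_pair {M : List Letter}
    (h : ∀ (L₂ L₃ : List Letter) (x : Fin 2) (b : Bool),
      M ≠ L₂ ++ (x, b) :: (x, !b) :: L₃) : IsRed M := by
  induction M with
  | nil => exact List.isChain_nil
  | cons a M ih =>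
    cases M with
    | nil => exact List.isChain_singleton a
    | cons c M' =>
      refine List.isChain_cons_cons.mpr ⟨?_, ih ?_⟩
      · rintro ⟨h1, h2⟩
        refine h [] M' a.1 a.2 ?_
        have hc : c = (a.1, !a.2) := by
          obtain ⟨a1, a2⟩ := a; obtain ⟨c1, c2⟩ := c
          simp only at h1 h2
          subst h1; simp [h2]
        rw [hc]; rfl
      · intro L₂ L₃ x b hM
        exact h (a :: L₂) L₃ x b (by rw [hM]; rfl)

theorem isRed_reduce (L : List Letter) : IsRed (FreeGroup.reduce L) :=
  isRed_of_no_pair fun _ _ _ _ h => FreeGroup.reduce.not h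

theorem isRed_toWord (g : FreeGroup (Fin 2)) : IsRed g.toWord := by
  rw [← FreeGroup.reduce_toWord]; exact isRed_reduce _

theorem IsRed.infix {L M : List Letter} (h : IsRed L) (h' : M <:+: L) : IsRed M :=
  List.IsChain.infix h h'

theorem IsRed.toWord_mk {L : List Letter} (h : IsRed L) : (FreeGroup.mk L).toWord = L := by
  rw [FreeGroup.toWord_mk, h.reduce_eq]

theorem IsRed.wlen_mk {L : List Letter} (h : IsRed L) : wlen (FreeGroup.mk L) = L.length := by
  rw [wlen, h.toWord_mk]

theorem IsRed.take {L : List Letter} (h : IsRed L) (n : ℕ) : IsRed (L.take n) :=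
  h.infix (L.take_prefix n).isInfix

theorem IsRed.drop {L : List Letter} (h : IsRed L) (n : ℕ) : IsRed (L.drop n) :=
  h.infix (L.drop_suffix n).isInfix

/-- no cancellation when lengths add -/
theorem toWord_mul_of_add (x y : FreeGroup (Fin 2))
    (h : wlen x + wlen y = wlen (x * y)) : (x * y).toWord = x.toWord ++ y.toWord := by
  have hxy : x * y = FreeGroup.mk (x.toWord ++ y.toWord) := by
    rw [← FreeGroup.mul_mk, FreeGroup.mk_toWord, FreeGroup.mk_toWord]
  have hred : FreeGroup.Red (x.toWord ++ y.toWord) ((x * y).toWord) := by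
    rw [hxy, FreeGroup.toWord_mk]; exact FreeGroup.reduce.red
  have hsub : (x * y).toWord <+ x.toWord ++ y.toWord := FreeGroup.Red.sublist hred
  refine hsub.eq_of_length ?_
  rw [List.length_append]
  exact h.symm

theorem mk_take_mul (g : FreeGroup (Fin 2)) (n : ℕ) :
    FreeGroup.mk (g.toWord.take n) * FreeGroup.mk (g.toWord.drop n) = g := by
  rw [FreeGroup.mul_mk, List.take_append_drop, FreeGroup.mk_toWord]

theorem wlen_mk_take (g : FreeGroup (Fin 2)) {n : ℕ} (hn : n ≤ wlen g) :
    wlen (FreeGroup.mk (g.toWord.take n)) = n := by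
  rw [((isRed_toWord g).take n).wlen_mk, List.length_take]
  simp only [wlen] at hn
  omega

theorem inv_mk_take_mul (g : FreeGroup (Fin 2)) (n : ℕ) :
    (FreeGroup.mk (g.toWord.take n))⁻¹ * g = FreeGroup.mk (g.toWord.drop n) := by
  have h0 := mk_take_mul g n
  calc (FreeGroup.mk (g.toWord.take n))⁻¹ * g
      = (FreeGroup.mk (g.toWord.take n))⁻¹ *
        (FreeGroup.mk (g.toWord.take n) * FreeGroup.mk (g.toWord.drop n)) := by rw [h0]
    _ = FreeGroup.mk (g.toWord.drop n) := by group

/-- prefix characterization -/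
theorem isPrefix_iff {h g : FreeGroup (Fin 2)} :
    wlen h + wlen (h⁻¹ * g) = wlen g ↔
      wlen h ≤ wlen g ∧ h = FreeGroup.mk (g.toWord.take (wlen h)) := by
  constructor
  · intro H
    have hg : h * (h⁻¹ * g) = g := by group
    have H' : wlen h + wlen (h⁻¹ * g) = wlen (h * (h⁻¹ * g)) := by rw [hg]; exact H
    have key : g.toWord = h.toWord ++ (h⁻¹ * g).toWord := by
      have k0 := toWord_mul_of_add h (h⁻¹ * g) H'
      rw [hg] at k0
      exact k0

    constructor
    · omega
    · conv_lhs => rw [← FreeGroup.mk_toWord (x := h)]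
      rw [key, wlen, List.take_left]
  · rintro ⟨hle, heq⟩
    have h2 : h⁻¹ * g = FreeGroup.mk (g.toWord.drop (wlen h)) := by
      conv_lhs => rw [heq]
      rw [inv_mk_take_mul]
    have h3 : wlen (h⁻¹ * g) = wlen g - wlen h := by
      rw [h2, ((isRed_toWord g).drop _).wlen_mk, List.length_drop]
      rfl
    omega


section Occ

variable {w : FreeGroup (Fin 2)}

theorem k_pos (hw : w ≠ 1) : 1 ≤ wlen w := by
  rcases Nat.eq_zero_or_pos (wlen w) with h | h
  · exact absurd (FreeGroup.toWord_eq_nil_iff.mp (List.length_eq_zero_iff.mp h)) hw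
  · exact h

theorem length_toWord_inv : (w⁻¹).toWord.length = wlen w := by
  rw [FreeGroup.toWord_inv, FreeGroup.invRev_length]; rfl

theorem occ_le {L : List Letter} {n : ℕ} {W₀ : List Letter} (hk : 1 ≤ wlen w)
    (hW : W₀.length = wlen w)
    (h : (L.drop n).take (wlen w) = W₀) : n + wlen w ≤ L.length := by
  have h2 := congrArg List.length h
  rw [List.length_take, List.length_drop, hW] at h2
  have h3 : wlen w ≤ L.length - n := by
    by_contra hlt
    push_neg at hlt
    rw [Nat.min_eq_right (le_of_lt hlt)] at h2
    omega
  omega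

theorem wplus_eq (hw : w ≠ 1) (g : FreeGroup (Fin 2)) {M : ℕ} (hM : wlen g ≤ M) :
    wplus w g = ↑(((Finset.range M).filter
      (fun n => (g.toWord.drop n).take (wlen w) = w.toWord)).image
      (fun n => FreeGroup.mk (g.toWord.take n))) := by
  have hk := k_pos hw
  ext h
  simp only [wplus, Set.mem_setOf_eq, Finset.coe_image, Set.mem_image, Finset.mem_coe,
    Finset.mem_filter, Finset.mem_range]
  constructor
  · rintro ⟨c1, c2, c3⟩
    obtain ⟨hle, heq⟩ := isPrefix_iff.mp c2
    obtain ⟨hle', heq'⟩ := isPrefix_iff.mp c3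
    rw [c1] at heq' hle'
    have hseg : FreeGroup.mk ((g.toWord.drop (wlen h)).take (wlen w)) = w := by
      have e0 : FreeGroup.mk (g.toWord.take (wlen h + wlen w)) =
          FreeGroup.mk (g.toWord.take (wlen h)) *
          FreeGroup.mk ((g.toWord.drop (wlen h)).take (wlen w)) := by
        rw [List.take_add, FreeGroup.mul_mk]
      have e1 : h * w = h * FreeGroup.mk ((g.toWord.drop (wlen h)).take (wlen w)) := by
        rw [heq', e0, ← heq]
      exact (mul_left_cancel e1).symm
    refine ⟨wlen h, ⟨by omega, ?_⟩, heq.symm⟩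
    conv_rhs => rw [← hseg]
    exact (((isRed_toWord g).drop (wlen h)).take (wlen w)).toWord_mk.symm
  · rintro ⟨n, ⟨hnM, hocc⟩, rfl⟩
    have hnk : n + wlen w ≤ wlen g := occ_le hk rfl hocc
    have hn : n ≤ wlen g := by omega
    have e1 : wlen (FreeGroup.mk (g.toWord.take n)) = n := wlen_mk_take g hn
    have hsw : FreeGroup.mk ((g.toWord.drop n).take (wlen w)) = w := by
      rw [hocc, FreeGroup.mk_toWord]
    have hw2 : FreeGroup.mk (g.toWord.take n) * w = FreeGroup.mk (g.toWord.take (n + wlen w)) := by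
      conv_lhs => rw [← hsw]
      rw [FreeGroup.mul_mk, ← List.take_add]
    have e2 : wlen (FreeGroup.mk (g.toWord.take n) * w) = n + wlen w := by
      rw [hw2]; exact wlen_mk_take g hnk
    refine ⟨by rw [e2, e1], isPrefix_iff.mpr ⟨by rw [e1]; exact hn, by rw [e1]⟩,
      isPrefix_iff.mpr ⟨by rw [e2]; exact hnk, by rw [e2, hw2]⟩⟩

theorem wminus_eq (hw : w ≠ 1) (g : FreeGroup (Fin 2)) {M : ℕ} (hM : wlen g ≤ M) :
    wminus w g = ↑(((Finset.range M).filter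
      (fun n => (g.toWord.drop n).take (wlen w) = (w⁻¹).toWord)).image
      (fun n => FreeGroup.mk (g.toWord.take (n + wlen w)))) := by
  have hk := k_pos hw
  ext h
  simp only [wminus, Set.mem_setOf_eq, Finset.coe_image, Set.mem_image, Finset.mem_coe,
    Finset.mem_filter, Finset.mem_range]
  constructor
  · rintro ⟨c1, c2, c3⟩
    obtain ⟨hle, heq⟩ := isPrefix_iff.mp c2
    obtain ⟨hle', heq'⟩ := isPrefix_iff.mp c3
    rw [c1] at heq hle
    have hseg : FreeGroup.mk ((g.toWord.drop (wlen (h * w))).take (wlen w)) = w⁻¹ := by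
      have e0 : FreeGroup.mk (g.toWord.take (wlen (h * w) + wlen w)) =
          FreeGroup.mk (g.toWord.take (wlen (h * w))) *
          FreeGroup.mk ((g.toWord.drop (wlen (h * w))).take (wlen w)) := by
        rw [List.take_add, FreeGroup.mul_mk]
      have e1 : h = (h * w) * FreeGroup.mk ((g.toWord.drop (wlen (h * w))).take (wlen w)) :=
        calc h = FreeGroup.mk (g.toWord.take (wlen (h * w) + wlen w)) := heq
          _ = FreeGroup.mk (g.toWord.take (wlen (h * w))) *
              FreeGroup.mk ((g.toWord.drop (wlen (h * w))).take (wlen w)) := e0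
          _ = (h * w) * FreeGroup.mk ((g.toWord.drop (wlen (h * w))).take (wlen w)) := by
              rw [← heq']
      have e2 : (h * w) * FreeGroup.mk ((g.toWord.drop (wlen (h * w))).take (wlen w)) =
          (h * w) * w⁻¹ := by rw [← e1, mul_inv_cancel_right]
      exact mul_left_cancel e2
    refine ⟨wlen (h * w), ⟨by omega, ?_⟩, ?_⟩
    · conv_rhs => rw [← hseg]
      exact (((isRed_toWord g).drop (wlen (h * w))).take (wlen w)).toWord_mk.symm
    · exact heq.symm
  · rintro ⟨n, ⟨hnM, hocc⟩, rfl⟩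
    have hnk : n + wlen w ≤ wlen g := occ_le hk length_toWord_inv hocc
    have hn : n ≤ wlen g := by omega
    have e1 : wlen (FreeGroup.mk (g.toWord.take (n + wlen w))) = n + wlen w :=
      wlen_mk_take g hnk
    have hsw : FreeGroup.mk ((g.toWord.drop n).take (wlen w)) = w⁻¹ := by
      rw [hocc, FreeGroup.mk_toWord]
    have hw2 : FreeGroup.mk (g.toWord.take (n + wlen w)) =
        FreeGroup.mk (g.toWord.take n) * w⁻¹ := by
      conv_rhs => rw [← hsw]
      rw [FreeGroup.mul_mk, ← List.take_add]
    have hw3 : FreeGroup.mk (g.toWord.take (n + wlen w)) * w =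
        FreeGroup.mk (g.toWord.take n) := by
      rw [hw2, inv_mul_cancel_right]
    have e2 : wlen (FreeGroup.mk (g.toWord.take (n + wlen w)) * w) = n := by
      rw [hw3]; exact wlen_mk_take g hn
    refine ⟨by rw [e2, e1], isPrefix_iff.mpr ⟨by rw [e1]; exact hnk, by rw [e1]⟩,
      isPrefix_iff.mpr ⟨by rw [e2]; exact hn, by rw [e2, hw3]⟩⟩

theorem wplus_finite (hw : w ≠ 1) (g : FreeGroup (Fin 2)) : (wplus w g).Finite := by
  rw [wplus_eq hw g (le_refl (wlen g))]
  exact Finset.finite_toSet _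

theorem wminus_finite (hw : w ≠ 1) (g : FreeGroup (Fin 2)) : (wminus w g).Finite := by
  rw [wminus_eq hw g (le_refl (wlen g))]
  exact Finset.finite_toSet _

end Occ

section Phi

variable {E : Type*} [NormedAddCommGroup E] [NormedSpace ℝ E]
variable (ρ : FreeGroup (Fin 2) → (E ≃ₗᵢ[ℝ] E)) (w : FreeGroup (Fin 2)) (e : E)

/-- The local contribution of position `n` of the word `L` to the Brooks sum. -/
noncomputable def phi (L : List Letter) (n : ℕ) : E :=
  (if (L.drop n).take (wlen w) = w.toWord then ρ (FreeGroup.mk (L.take n)) e else 0) -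
  (if (L.drop n).take (wlen w) = (w⁻¹).toWord then
    ρ (FreeGroup.mk (L.take (n + wlen w))) e else 0)

theorem phi_eq_zero (hk : 1 ≤ wlen w) {L : List Letter} {n : ℕ}
    (h : L.length < n + wlen w) : phi ρ w e L n = 0 := by
  unfold phi
  have h1 : ¬((L.drop n).take (wlen w) = w.toWord) :=
    fun hc => absurd (occ_le hk rfl hc) (by omega)
  have h2 : ¬((L.drop n).take (wlen w) = (w⁻¹).toWord) :=
    fun hc => absurd (occ_le hk length_toWord_inv hc) (by omega)
  rw [if_neg h1, if_neg h2, sub_zero]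

theorem norm_phi_le (L : List Letter) (n : ℕ) : ‖phi ρ w e L n‖ ≤ 2 * ‖e‖ := by
  have b1 : ∀ (c : Prop) (inst : Decidable c) (h : FreeGroup (Fin 2)),
      ‖if c then ρ h e else 0‖ ≤ ‖e‖ := by
    intro c inst h
    split_ifs
    · rw [LinearIsometryEquiv.norm_map]
    · simp [norm_nonneg]
  refine (norm_sub_le _ _).trans ?_
  calc ‖_‖ + ‖_‖ ≤ ‖e‖ + ‖e‖ := add_le_add (b1 _ _ _) (b1 _ _ _)
    _ = 2 * ‖e‖ := by ring

theorem take_append_self (A B : List Letter) (j : ℕ) :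
    (A ++ B).take (A.length + j) = A ++ B.take j := by
  rw [List.take_append, List.take_of_length_le (by omega : A.length ≤ A.length + j),
    Nat.add_sub_cancel_left]

theorem drop_append_self (A B : List Letter) (j : ℕ) :
    (A ++ B).drop (A.length + j) = B.drop j := by
  rw [List.drop_append, List.drop_eq_nil_of_le (by omega : A.length ≤ A.length + j),
    Nat.add_sub_cancel_left, List.nil_append]

theorem phi_shift (hρmul : ∀ (g h : FreeGroup (Fin 2)) (x : E), ρ (g * h) x = ρ g (ρ h x))
    (A B : List Letter) (m : ℕ) :
    phi ρ w e (A ++ B) (A.length + m) = ρ (FreeGroup.mk A) (phi ρ w e B m) := by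
  unfold phi
  rw [map_sub, apply_ite (ρ (FreeGroup.mk A)), apply_ite (ρ (FreeGroup.mk A)), map_zero]
  rw [drop_append_self, take_append_self,
    show A.length + m + wlen w = A.length + (m + wlen w) by omega, take_append_self,
    ← FreeGroup.mul_mk, ← FreeGroup.mul_mk, hρmul, hρmul]

theorem phi_left {A : List Letter} (B : List Letter) {n : ℕ} (h : n + wlen w ≤ A.length) :
    phi ρ w e (A ++ B) n = phi ρ w e A n := by
  unfold phi
  have hd : ((A ++ B).drop n).take (wlen w) = (A.drop n).take (wlen w) := by
    rw [List.drop_append, show n - A.length = 0 by omega, List.drop_zero,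
      List.take_append, show wlen w - (A.drop n).length = 0 by
        rw [List.length_drop]; omega, List.take_zero, List.append_nil]
  have ht1 : (A ++ B).take n = A.take n := by
    rw [List.take_append, show n - A.length = 0 by omega, List.take_zero,
      List.append_nil]
  have ht2 : (A ++ B).take (n + wlen w) = A.take (n + wlen w) := by
    rw [List.take_append, show n + wlen w - A.length = 0 by omega, List.take_zero,
      List.append_nil]
  rw [hd, ht1, ht2]

theorem invRev_append (A B : List Letter) :
    FreeGroup.invRev (A ++ B) = FreeGroup.invRev B ++ FreeGroup.invRev A := by
  simp [FreeGroup.invRev]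

theorem mk_invRev_drop (G : List Letter) (i : ℕ) :
    FreeGroup.mk (FreeGroup.invRev (G.drop i)) =
      (FreeGroup.mk G)⁻¹ * FreeGroup.mk (G.take i) := by
  have h0 : FreeGroup.mk (G.take i) * FreeGroup.mk (G.drop i) = FreeGroup.mk G := by
    rw [FreeGroup.mul_mk, List.take_append_drop]
  rw [← FreeGroup.inv_mk, ← h0]
  group

theorem phi_invRev (hρmul : ∀ (g h : FreeGroup (Fin 2)) (x : E), ρ (g * h) x = ρ g (ρ h x))
    {G : List Letter} {m : ℕ} (hm : m + wlen w ≤ G.length) :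
    phi ρ w e (FreeGroup.invRev G) (G.length - (m + wlen w)) =
      - ρ ((FreeGroup.mk G)⁻¹) (phi ρ w e G m) := by
  have hsr : (G.drop m).take (wlen w) ++ G.drop (m + wlen w) = G.drop m := by
    rw [← List.drop_drop, List.take_append_drop]
  have hG : G = G.take m ++ ((G.drop m).take (wlen w) ++ G.drop (m + wlen w)) := by
    rw [hsr, List.take_append_drop]
  have hs : ((G.drop m).take (wlen w)).length = wlen w := by
    rw [List.length_take, List.length_drop]; exact Nat.min_eq_left (by omega)
  have hr : (G.drop (m + wlen w)).length = G.length - (m + wlen w) := List.length_drop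
  have hI : FreeGroup.invRev G = FreeGroup.invRev (G.drop (m + wlen w)) ++
      (FreeGroup.invRev ((G.drop m).take (wlen w)) ++ FreeGroup.invRev (G.take m)) := by
    conv_lhs => rw [hG]
    rw [invRev_append, invRev_append, List.append_assoc]
  have d2 : ((FreeGroup.invRev G).drop (G.length - (m + wlen w))).take (wlen w) =
      FreeGroup.invRev ((G.drop m).take (wlen w)) := by
    rw [hI, List.drop_left' (by rw [FreeGroup.invRev_length, hr]),
      List.take_left' (by rw [FreeGroup.invRev_length, hs])]
  have t1 : (FreeGroup.invRev G).take (G.length - (m + wlen w)) =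
      FreeGroup.invRev (G.drop (m + wlen w)) := by
    rw [hI, List.take_left' (by rw [FreeGroup.invRev_length, hr])]
  have t2 : (FreeGroup.invRev G).take (G.length - (m + wlen w) + wlen w) =
      FreeGroup.invRev (G.drop m) := by
    rw [hI, List.take_append,
      List.take_of_length_le (by rw [FreeGroup.invRev_length, hr]; omega),
      show G.length - (m + wlen w) + wlen w - (FreeGroup.invRev (G.drop (m + wlen w))).length
        = wlen w by rw [FreeGroup.invRev_length, hr]; omega,
      List.take_left' (by rw [FreeGroup.invRev_length, hs]), ← invRev_append, hsr]
  have c1 : (((FreeGroup.invRev G).drop (G.length - (m + wlen w))).take (wlen w) = w.toWord)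
      ↔ ((G.drop m).take (wlen w) = (w⁻¹).toWord) := by
    rw [d2, FreeGroup.invRev_involutive.eq_iff, FreeGroup.toWord_inv]
  have c2 : (((FreeGroup.invRev G).drop (G.length - (m + wlen w))).take (wlen w) = (w⁻¹).toWord)
      ↔ ((G.drop m).take (wlen w) = w.toWord) := by
    rw [d2, FreeGroup.toWord_inv, FreeGroup.invRev_injective.eq_iff]
  unfold phi
  rw [map_sub, apply_ite (ρ ((FreeGroup.mk G)⁻¹)), apply_ite (ρ ((FreeGroup.mk G)⁻¹)), map_zero,
    neg_sub]
  simp only [c1, c2, t1, t2]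
  rw [mk_invRev_drop, mk_invRev_drop, hρmul, hρmul]

end Phi

section Main

variable {E : Type*} [NormedAddCommGroup E] [NormedSpace ℝ E]
variable (ρ : FreeGroup (Fin 2) → (E ≃ₗᵢ[ℝ] E)) (w : FreeGroup (Fin 2)) (e : E)

theorem sum_range_add (f : ℕ → E) (a b : ℕ) :
    ∑ n ∈ Finset.range (a + b), f n =
      ∑ n ∈ Finset.range a, f n + ∑ i ∈ Finset.range b, f (a + i) := by
  have h1 : ∑ i ∈ Finset.Ico a (a + b), f i = ∑ i ∈ Finset.range b, f (a + i) := by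
    rw [Finset.sum_Ico_eq_sum_range, Nat.add_sub_cancel_left]
  rw [← h1, Finset.range_eq_Ico, Finset.range_eq_Ico,
    Finset.sum_Ico_consecutive f (Nat.zero_le a) (Nat.le_add_right a b)]

theorem eta_sum (hw : w ≠ 1) (g : FreeGroup (Fin 2)) {M : ℕ} (hM : wlen g ≤ M) :
    brooksEta ρ w e g = ∑ n ∈ Finset.range M, phi ρ w e g.toWord n := by
  have hk := k_pos hw
  have hlen : g.toWord.length = wlen g := rfl
  have hinjP : ∀ x ∈ (Finset.range M).filter
        (fun n => (g.toWord.drop n).take (wlen w) = w.toWord),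
      ∀ y ∈ (Finset.range M).filter
        (fun n => (g.toWord.drop n).take (wlen w) = w.toWord),
      FreeGroup.mk (g.toWord.take x) = FreeGroup.mk (g.toWord.take y) → x = y := by
    intro x hx y hy hxy
    simp only [Finset.mem_filter, Finset.mem_range] at hx hy
    have hx2 := occ_le hk rfl hx.2
    have hy2 := occ_le hk rfl hy.2
    have h3 := congrArg wlen hxy
    rw [wlen_mk_take g (by omega), wlen_mk_take g (by omega)] at h3
    exact h3
  have hinjM : ∀ x ∈ (Finset.range M).filter
        (fun n => (g.toWord.drop n).take (wlen w) = (w⁻¹).toWord),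
      ∀ y ∈ (Finset.range M).filter
        (fun n => (g.toWord.drop n).take (wlen w) = (w⁻¹).toWord),
      FreeGroup.mk (g.toWord.take (x + wlen w)) = FreeGroup.mk (g.toWord.take (y + wlen w))
        → x = y := by
    intro x hx y hy hxy
    simp only [Finset.mem_filter, Finset.mem_range] at hx hy
    have hx2 := occ_le hk length_toWord_inv hx.2
    have hy2 := occ_le hk length_toWord_inv hy.2
    have h3 := congrArg wlen hxy
    rw [wlen_mk_take g (by omega), wlen_mk_take g (by omega)] at h3
    omega
  rw [brooksEta, wplus_eq hw g hM, wminus_eq hw g hM, finsum_mem_coe_finset,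
    finsum_mem_coe_finset, Finset.sum_image hinjP, Finset.sum_image hinjM,
    Finset.sum_filter, Finset.sum_filter, ← Finset.sum_sub_distrib]
  rfl

theorem decomp : ∀ (U V : List Letter), IsRed U → IsRed V →
    ∃ P C Q : List Letter, U = P ++ C ∧ V = FreeGroup.invRev C ++ Q ∧
      FreeGroup.reduce (U ++ V) = P ++ Q := by
  intro U
  induction U using List.reverseRecOn with
  | nil =>
    intro V _ hV
    exact ⟨[], [], V, rfl, by simp [FreeGroup.invRev], by simpa using hV.reduce_eq⟩
  | append_singleton U₀ x ih =>
    intro V hU hV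
    cases V with
    | nil =>
      refine ⟨U₀ ++ [x], [], [], by simp, by simp [FreeGroup.invRev], ?_⟩
      simpa using hU.reduce_eq
    | cons y V₀ =>
      by_cases hxy : y = (x.1, !x.2)
      · subst hxy
        have hU₀ : IsRed U₀ := hU.infix ⟨[], [x], by simp⟩
        have hV₀ : IsRed V₀ := (List.isChain_cons.mp hV).2
        obtain ⟨P, C, Q, h1, h2, h3⟩ := ih V₀ hU₀ hV₀
        refine ⟨P, C ++ [x], Q, by rw [h1, List.append_assoc], ?_, ?_⟩
        · rw [invRev_append, h2]
          simp [FreeGroup.invRev]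
        · have e : (U₀ ++ [x]) ++ ((x.1, !x.2) :: V₀) = U₀ ++ (x.1, x.2) :: (x.1, !x.2) :: V₀ := by
            simp
          have step : FreeGroup.Red.Step ((U₀ ++ [x]) ++ ((x.1, !x.2) :: V₀)) (U₀ ++ V₀) := by
            rw [e]
            exact FreeGroup.Red.Step.not
          rw [FreeGroup.reduce.Step.eq step, h3]
      · refine ⟨U₀ ++ [x], [], y :: V₀, by simp, by simp [FreeGroup.invRev], ?_⟩
        have hred : IsRed ((U₀ ++ [x]) ++ y :: V₀) := by
          apply List.isChain_append.mpr
          refine ⟨hU, hV, ?_⟩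
          intro a ha b hb
          rw [List.getLast?_concat] at ha
          simp only [List.head?_cons, Option.mem_def, Option.some.injEq] at ha hb
          subst ha; subst hb
          rintro ⟨e1, e2⟩
          exact hxy (Prod.ext e1.symm (by rw [e2, Bool.not_not]))
        exact hred.reduce_eq

end Main

end BrooksAux

open BrooksAux

/-- For a nontrivial `w ∈ F₂`, a representation `ρ` of `F₂` by linear isometries of a normed
space `E` and a vector `e ∈ E`, the sets `w₊(g)` and `w₋(g)` are finite, and the map `η` is
an anti-symmetric quasi-cocycle for `ρ`. -/
theorem brooksEta_quasicocycle {E : Type*} [NormedAddCommGroup E] [NormedSpace ℝ E]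
    (ρ : FreeGroup (Fin 2) → (E ≃ₗᵢ[ℝ] E))
    (hρ1 : ∀ x : E, ρ 1 x = x)
    (hρmul : ∀ (g h : FreeGroup (Fin 2)) (x : E), ρ (g * h) x = ρ g (ρ h x))
    (w : FreeGroup (Fin 2)) (hw : w ≠ 1) (e : E) :
    (∀ g : FreeGroup (Fin 2), (wplus w g).Finite ∧ (wminus w g).Finite) ∧
    (∃ C : ℝ, ∀ g g' : FreeGroup (Fin 2),
      ‖brooksEta ρ w e (g * g') - brooksEta ρ w e g - ρ g (brooksEta ρ w e g')‖ ≤ C) ∧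
    (∀ g : FreeGroup (Fin 2),
      brooksEta ρ w e g⁻¹ = - (ρ g⁻¹ (brooksEta ρ w e g))) := by
  have hk := k_pos hw
  refine ⟨fun g => ⟨wplus_finite hw g, wminus_finite hw g⟩, ?_, ?_⟩
  · -- quasi-cocycle bound
    refine ⟨6 * (wlen w : ℝ) * ‖e‖, fun g g' => ?_⟩
    obtain ⟨P, C, Q, hU, hV, hred⟩ := decomp g.toWord g'.toWord (isRed_toWord g) (isRed_toWord g')
    have hgPC : g = FreeGroup.mk (P ++ C) := by rw [← hU, FreeGroup.mk_toWord]
    have hZ : (g * g').toWord = P ++ Q := by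
      have h0 : g * g' = FreeGroup.mk (g.toWord ++ g'.toWord) := by
        rw [← FreeGroup.mul_mk, FreeGroup.mk_toWord, FreeGroup.mk_toWord]
      rw [h0, FreeGroup.toWord_mk, hred]
    have hlen1 : wlen g = P.length + C.length := by rw [wlen, hU, List.length_append]
    have hlen2 : wlen g' = C.length + Q.length := by
      rw [wlen, hV, List.length_append, FreeGroup.invRev_length]
    have hlenZ : wlen (g * g') = P.length + Q.length := by rw [wlen, hZ, List.length_append]
    have E1 : brooksEta ρ w e (g * g') =
        (∑ n ∈ Finset.range P.length, phi ρ w e (P ++ Q) n)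
        + ∑ i ∈ Finset.range (Q.length + 1), phi ρ w e (P ++ Q) (P.length + i) := by
      rw [eta_sum ρ w e hw (g * g') (M := P.length + (Q.length + 1)) (by omega), hZ,
        sum_range_add]
    have E2 : brooksEta ρ w e g =
        (∑ n ∈ Finset.range P.length, phi ρ w e (P ++ C) n)
        + ∑ i ∈ Finset.range (C.length + 1), phi ρ w e (P ++ C) (P.length + i) := by
      rw [eta_sum ρ w e hw g (M := P.length + (C.length + 1)) (by omega), hU, sum_range_add]
    have E3 : ρ g (brooksEta ρ w e g') =
        (∑ n ∈ Finset.range C.length, ρ g (phi ρ w e (FreeGroup.invRev C ++ Q) n))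
        + ∑ i ∈ Finset.range (Q.length + 1),
            ρ g (phi ρ w e (FreeGroup.invRev C ++ Q) (C.length + i)) := by
      rw [eta_sum ρ w e hw g' (M := C.length + (Q.length + 1)) (by omega), hV, map_sum,
        sum_range_add]
    have hg1 : g * FreeGroup.mk (FreeGroup.invRev C) = FreeGroup.mk P := by
      rw [hgPC, ← FreeGroup.inv_mk, ← FreeGroup.mul_mk]; group
    have hg2 : g * (FreeGroup.mk C)⁻¹ = FreeGroup.mk P := by
      rw [hgPC, ← FreeGroup.mul_mk]; group
    have key1 : ∀ i, phi ρ w e (P ++ Q) (P.length + i)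
        = ρ g (phi ρ w e (FreeGroup.invRev C ++ Q) (C.length + i)) := by
      intro i
      rw [phi_shift ρ w e hρmul P Q i,
        show C.length + i = (FreeGroup.invRev C).length + i by rw [FreeGroup.invRev_length],
        phi_shift ρ w e hρmul (FreeGroup.invRev C) Q i, ← hρmul, hg1]
    have key2 : ∀ n, n + wlen w ≤ P.length →
        phi ρ w e (P ++ Q) n = phi ρ w e (P ++ C) n := by
      intro n hn
      rw [phi_left ρ w e Q hn, phi_left ρ w e C hn]
    have key3 : ∀ i, i + wlen w ≤ C.length →
        phi ρ w e (P ++ C) (P.length + i)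
          = - ρ g (phi ρ w e (FreeGroup.invRev C ++ Q) (C.length - (i + wlen w))) := by
      intro i hi
      rw [phi_shift ρ w e hρmul P C i,
        phi_left ρ w e (A := FreeGroup.invRev C) Q (by rw [FreeGroup.invRev_length]; omega),
        phi_invRev ρ w e hρmul hi, map_neg, ← hρmul, hg2, neg_neg]
    have hA1 : ∑ n ∈ Finset.range P.length, phi ρ w e (P ++ Q) n
        = (∑ n ∈ Finset.range P.length, phi ρ w e (P ++ C) n)
          + ∑ n ∈ (Finset.range P.length).filter (fun n => ¬(n + wlen w ≤ P.length)),
              (phi ρ w e (P ++ Q) n - phi ρ w e (P ++ C) n) := by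
      have h2 : ∑ n ∈ (Finset.range P.length).filter (fun n => ¬(n + wlen w ≤ P.length)),
            (phi ρ w e (P ++ Q) n - phi ρ w e (P ++ C) n)
          = ∑ n ∈ Finset.range P.length, (phi ρ w e (P ++ Q) n - phi ρ w e (P ++ C) n) := by
        refine Finset.sum_filter_of_ne ?_
        intro n _ hne hc
        exact hne (by rw [key2 n hc, sub_self])
      rw [h2, Finset.sum_sub_distrib]
      abel
    have hB2 : ∑ i ∈ Finset.range (C.length + 1), phi ρ w e (P ++ C) (P.length + i)
        = - ∑ j ∈ (Finset.range C.length).filter (fun j => j + wlen w ≤ C.length),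
            ρ g (phi ρ w e (FreeGroup.invRev C ++ Q) j) := by
      have h1 : ∑ i ∈ Finset.range (C.length + 1), phi ρ w e (P ++ C) (P.length + i)
          = ∑ i ∈ (Finset.range (C.length + 1)).filter (fun i => i + wlen w ≤ C.length),
              phi ρ w e (P ++ C) (P.length + i) := by
        refine (Finset.sum_filter_of_ne ?_).symm
        intro i _ hne
        by_contra hc
        exact hne (phi_eq_zero ρ w e hk (by rw [List.length_append]; omega))
      rw [h1, ← Finset.sum_neg_distrib]
      refine Finset.sum_nbij' (fun i => C.length - (i + wlen w))
        (fun j => C.length - (j + wlen w)) ?_ ?_ ?_ ?_ ?_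
      · intro a ha; simp only [Finset.mem_filter, Finset.mem_range] at ha ⊢; omega
      · intro b hb; simp only [Finset.mem_filter, Finset.mem_range] at hb ⊢; omega
      · intro a ha; simp only [Finset.mem_filter, Finset.mem_range] at ha
        show C.length - (C.length - (a + wlen w) + wlen w) = a; omega
      · intro b hb; simp only [Finset.mem_filter, Finset.mem_range] at hb
        show C.length - (C.length - (b + wlen w) + wlen w) = b; omega
      · intro a ha
        simp only [Finset.mem_filter, Finset.mem_range] at ha
        rw [key3 a ha.2]
    have hC1 : ∑ n ∈ Finset.range C.length, ρ g (phi ρ w e (FreeGroup.invRev C ++ Q) n)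
        = (∑ j ∈ (Finset.range C.length).filter (fun j => j + wlen w ≤ C.length),
            ρ g (phi ρ w e (FreeGroup.invRev C ++ Q) j))
          + ∑ j ∈ (Finset.range C.length).filter (fun j => ¬(j + wlen w ≤ C.length)),
            ρ g (phi ρ w e (FreeGroup.invRev C ++ Q) j) :=
      (Finset.sum_filter_add_sum_filter_not _ _ _).symm
    have hdiff : brooksEta ρ w e (g * g') - brooksEta ρ w e g - ρ g (brooksEta ρ w e g')
        = (∑ n ∈ (Finset.range P.length).filter (fun n => ¬(n + wlen w ≤ P.length)),
            (phi ρ w e (P ++ Q) n - phi ρ w e (P ++ C) n))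
          - ∑ j ∈ (Finset.range C.length).filter (fun j => ¬(j + wlen w ≤ C.length)),
            ρ g (phi ρ w e (FreeGroup.invRev C ++ Q) j) := by
      rw [E1, E2, E3, hA1, hB2, hC1, Finset.sum_congr rfl (fun i _ => key1 i)]
      abel
    rw [hdiff]
    have hcard1 : (((Finset.range P.length).filter
        (fun n => ¬(n + wlen w ≤ P.length))).card : ℝ) ≤ (wlen w : ℝ) := by
      have : ((Finset.range P.length).filter
          (fun n => ¬(n + wlen w ≤ P.length))).card ≤ wlen w := by
        refine le_trans (Finset.card_le_card
          (t := Finset.Ico (P.length - wlen w) P.length) (fun n hn => ?_)) ?_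
        · simp only [Finset.mem_filter, Finset.mem_range] at hn
          exact Finset.mem_Ico.mpr ⟨by omega, hn.1⟩
        · rw [Nat.card_Ico]; omega
      exact_mod_cast this
    have hcard2 : (((Finset.range C.length).filter
        (fun j => ¬(j + wlen w ≤ C.length))).card : ℝ) ≤ (wlen w : ℝ) := by
      have : ((Finset.range C.length).filter
          (fun j => ¬(j + wlen w ≤ C.length))).card ≤ wlen w := by
        refine le_trans (Finset.card_le_card
          (t := Finset.Ico (C.length - wlen w) C.length) (fun n hn => ?_)) ?_
        · simp only [Finset.mem_filter, Finset.mem_range] at hn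
          exact Finset.mem_Ico.mpr ⟨by omega, hn.1⟩
        · rw [Nat.card_Ico]; omega
      exact_mod_cast this
    have hb1 : ‖∑ n ∈ (Finset.range P.length).filter (fun n => ¬(n + wlen w ≤ P.length)),
        (phi ρ w e (P ++ Q) n - phi ρ w e (P ++ C) n)‖ ≤ (wlen w : ℝ) * (4 * ‖e‖) := by
      refine le_trans (norm_sum_le _ _) ?_
      refine le_trans (Finset.sum_le_card_nsmul _ _ (4 * ‖e‖) ?_) ?_
      · intro x _
        refine le_trans (norm_sub_le _ _) ?_
        have b1 := norm_phi_le ρ w e (P ++ Q) x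
        have b2 := norm_phi_le ρ w e (P ++ C) x
        linarith
      · rw [nsmul_eq_mul]
        exact mul_le_mul_of_nonneg_right hcard1 (by positivity)
    have hb2 : ‖∑ j ∈ (Finset.range C.length).filter (fun j => ¬(j + wlen w ≤ C.length)),
        ρ g (phi ρ w e (FreeGroup.invRev C ++ Q) j)‖ ≤ (wlen w : ℝ) * (2 * ‖e‖) := by
      refine le_trans (norm_sum_le _ _) ?_
      refine le_trans (Finset.sum_le_card_nsmul _ _ (2 * ‖e‖) ?_) ?_
      · intro x _
        rw [LinearIsometryEquiv.norm_map]
        exact norm_phi_le ρ w e _ x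
      · rw [nsmul_eq_mul]
        exact mul_le_mul_of_nonneg_right hcard2 (by positivity)
    calc ‖_ - _‖ ≤ ‖_‖ + ‖_‖ := norm_sub_le _ _
      _ ≤ (wlen w : ℝ) * (4 * ‖e‖) + (wlen w : ℝ) * (2 * ‖e‖) := add_le_add hb1 hb2
      _ = 6 * (wlen w : ℝ) * ‖e‖ := by ring
  · -- anti-symmetry
    intro g
    have hwleninv : wlen g⁻¹ = wlen g := by
      rw [wlen, wlen, FreeGroup.toWord_inv, FreeGroup.invRev_length]
    have hGlen : g.toWord.length = wlen g := rfl
    have Einv : brooksEta ρ w e g⁻¹ = ∑ n ∈ Finset.range (wlen g),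
        phi ρ w e (FreeGroup.invRev g.toWord) n := by
      rw [eta_sum ρ w e hw g⁻¹ (M := wlen g) (le_of_eq hwleninv), FreeGroup.toWord_inv]
    have Eg : brooksEta ρ w e g = ∑ n ∈ Finset.range (wlen g), phi ρ w e g.toWord n :=
      eta_sum ρ w e hw g le_rfl
    have hfil : ∀ (L : List (Fin 2 × Bool)), L.length = wlen g →
        ∑ n ∈ Finset.range (wlen g), phi ρ w e L n
        = ∑ n ∈ (Finset.range (wlen g)).filter (fun n => n + wlen w ≤ wlen g),
            phi ρ w e L n := by
      intro L hL
      refine (Finset.sum_filter_of_ne ?_).symm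
      intro n _ hne
      by_contra hc
      exact hne (phi_eq_zero ρ w e hk (by omega))
    have hmain : ∑ n ∈ (Finset.range (wlen g)).filter (fun n => n + wlen w ≤ wlen g),
          phi ρ w e (FreeGroup.invRev g.toWord) n
        = ∑ m ∈ (Finset.range (wlen g)).filter (fun m => m + wlen w ≤ wlen g),
            - ρ g⁻¹ (phi ρ w e g.toWord m) := by
      refine Finset.sum_nbij' (fun n => wlen g - (n + wlen w)) (fun m => wlen g - (m + wlen w))
        ?_ ?_ ?_ ?_ ?_
      · intro a ha; simp only [Finset.mem_filter, Finset.mem_range] at ha ⊢; omega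
      · intro a ha; simp only [Finset.mem_filter, Finset.mem_range] at ha ⊢; omega
      · intro a ha; simp only [Finset.mem_filter, Finset.mem_range] at ha
        show wlen g - (wlen g - (a + wlen w) + wlen w) = a; omega
      · intro a ha; simp only [Finset.mem_filter, Finset.mem_range] at ha
        show wlen g - (wlen g - (a + wlen w) + wlen w) = a; omega
      · intro a ha
        simp only [Finset.mem_filter, Finset.mem_range] at ha
        have hm : (wlen g - (a + wlen w)) + wlen w ≤ g.toWord.length := by omega
        have hmm := phi_invRev ρ w e hρmul (G := g.toWord) (m := wlen g - (a + wlen w)) hm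
        rw [FreeGroup.mk_toWord] at hmm
        have harg : g.toWord.length - ((wlen g - (a + wlen w)) + wlen w) = a := by omega
        rw [harg] at hmm
        exact hmm
    have hsum : ∑ m ∈ (Finset.range (wlen g)).filter (fun m => m + wlen w ≤ wlen g),
          - ρ g⁻¹ (phi ρ w e g.toWord m)
        = - ρ g⁻¹ (∑ m ∈ (Finset.range (wlen g)).filter (fun m => m + wlen w ≤ wlen g),
            phi ρ w e g.toWord m) := by
      rw [Finset.sum_neg_distrib, ← map_sum]
    rw [Einv, hfil _ (by rw [FreeGroup.invRev_length]; exact hGlen), hmain, hsum, ← hfil _ rfl, ← Eg]
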